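/- Let Σ be the ranked alphabet with constants ♯, $, ♭, a unary symbol f, and binary symbols g, h, and let R over Σ consist of the rules ♯ → f(♯), ♯ → ♭, $ → f($), $ → ♭, and g(x₁, x₁) → h(x₁, x₁). Then R*_Σ({g(♯, $)}) ∩ {h(t₁, t₂) : t₁, t₂ ∈ T_Σ} = {h(fᵏ(♭), fᵏ(♭)) : k ≥ 0}, and consequently R*_Σ({g(♯, $)}) is not a recognizable tree language over Σ. -/

import Mathlib

set_option autoImplicit false

/-!
Basic framework: ranked alphabets, terms, term rewrite systems,
bottom-up tree automata, recognizability.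
A ranked alphabet is modelled by a (finite) type `σ` together with an
arity function `ar : σ → ℕ`.  `Tm.var n` denotes the variable `x_{n+1}`,
so `T_Σ(X_m)` corresponds to terms all of whose variables satisfy `n < m`,
and ground terms (`T_Σ`) are terms satisfying `Tm.Ground`.
-/

/-- Terms over the ranked alphabet `(σ, ar)` with variables `x₁, x₂, …`
(`var n` is `x_{n+1}`). -/
inductive Tm (σ : Type) (ar : σ → ℕ) : Type
  | var : ℕ → Tm σ ar
  | app : (f : σ) → (Fin (ar f) → Tm σ ar) → Tm σ ar

namespace Tm

variable {σ γ : Type} {ar : σ → ℕ} {arγ : γ → ℕ}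

/-- Application of a substitution `θ` (assigning a term to each variable). -/
def subst (θ : ℕ → Tm σ ar) : Tm σ ar → Tm σ ar
  | var n => θ n
  | app f ts => app f fun i => (ts i).subst θ

/-- A term is ground if it contains no variables. -/
def Ground : Tm σ ar → Prop
  | var _ => False
  | app _ ts => ∀ i, (ts i).Ground

/-- The set of (indices of) variables occurring in a term. -/
def vars : Tm σ ar → Set ℕ
  | var n => {n}
  | app _ ts => ⋃ i, (ts i).vars

/-- Number of occurrences of the variable `x_{n+1}` in a term. -/
def count (n : ℕ) : Tm σ ar → ℕ
  | var m => if m = n then 1 else 0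
  | app _ ts => ∑ i, (ts i).count n

/-- A term is linear if every variable occurs at most once in it. -/
def Linear (t : Tm σ ar) : Prop := ∀ n, t.count n ≤ 1

/-- The symbol `s` occurs in the term. -/
def symOccurs (s : σ) : Tm σ ar → Prop
  | var _ => False
  | app f ts => f = s ∨ ∃ i, (ts i).symOccurs s

/-- Height of a term (constants and variables have height 0). -/
def height : Tm σ ar → ℕ
  | var _ => 0
  | app _ ts => Finset.univ.sup fun i => (ts i).height + 1

/-- Renaming of the alphabet along an arity-preserving map. -/
def map (ι : σ → γ) (h : ∀ s, arγ (ι s) = ar s) : Tm σ ar → Tm γ arγ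
  | var n => var n
  | app f ts => app (ι f) fun i => (ts (Fin.cast (h f) i)).map ι h

/-- The subterm of `t` at a position (a list of argument indices), if defined. -/
def subAt : Tm σ ar → List ℕ → Option (Tm σ ar)
  | t, [] => some t
  | var _, _ :: _ => none
  | app f ts, i :: p => if h : i < ar f then (ts ⟨i, h⟩).subAt p else none

/-- Subterm relation. -/
inductive Subtm : Tm σ ar → Tm σ ar → Prop
  | refl (t : Tm σ ar) : Subtm t t
  | app {s : Tm σ ar} {f : σ} {ts : Fin (ar f) → Tm σ ar} (i : Fin (ar f)) :
      Subtm s (ts i) → Subtm s (Tm.app f ts)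

end Tm

section Rewriting

variable {σ γ : Type} {ar : σ → ℕ} {arγ : γ → ℕ}

/-- One-step rewriting by the rule set `R`: apply a rule under a substitution
at the root, or rewrite inside one argument. -/
inductive Step (R : Set (Tm σ ar × Tm σ ar)) : Tm σ ar → Tm σ ar → Prop
  | rule {l r : Tm σ ar} (θ : ℕ → Tm σ ar) (h : (l, r) ∈ R) :
      Step R (l.subst θ) (r.subst θ)
  | congr {f : σ} {ts : Fin (ar f) → Tm σ ar} {t' : Tm σ ar} (i : Fin (ar f)) :
      Step R (ts i) t' → Step R (Tm.app f ts) (Tm.app f (Function.update ts i t'))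

/-- Many-step rewriting: reflexive-transitive closure of `Step`. -/
def Steps (R : Set (Tm σ ar × Tm σ ar)) : Tm σ ar → Tm σ ar → Prop :=
  Relation.ReflTransGen (Step R)

/-- `R` is a term rewrite system: finitely many rules, and every variable of a
right-hand side occurs in the corresponding left-hand side. -/
def IsTRS (R : Set (Tm σ ar × Tm σ ar)) : Prop :=
  R.Finite ∧ ∀ lr ∈ R, lr.2.vars ⊆ lr.1.vars

/-- The set `R*(L)` of descendants of members of `L`. -/
def Desc (R : Set (Tm σ ar × Tm σ ar)) (L : Set (Tm σ ar)) : Set (Tm σ ar) :=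
  {p | ∃ q ∈ L, Steps R q p}

/-- `R` is terminating: there is no infinite reduction sequence. -/
def Terminating (R : Set (Tm σ ar × Tm σ ar)) : Prop :=
  ¬ ∃ f : ℕ → Tm σ ar, ∀ n, Step R (f n) (f (n + 1))

/-- `R` is confluent. -/
def Confluent (R : Set (Tm σ ar × Tm σ ar)) : Prop :=
  ∀ a b c, Steps R a b → Steps R a c → ∃ d, Steps R b d ∧ Steps R c d

/-- `u` is an `R`-normal form of `t`. -/
def NormalFormOf (R : Set (Tm σ ar × Tm σ ar)) (t u : Tm σ ar) : Prop :=
  Steps R t u ∧ ¬ ∃ v, Step R u v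

/-- The term is a variable. -/
def IsVarTm (t : Tm σ ar) : Prop := ∃ n, t = Tm.var n

/-- Every left-hand side is linear. -/
def LeftLinearTRS (R : Set (Tm σ ar × Tm σ ar)) : Prop :=
  ∀ lr ∈ R, lr.1.Linear

/-- All left- and right-hand sides are linear. -/
def LinearTRS (R : Set (Tm σ ar × Tm σ ar)) : Prop :=
  ∀ lr ∈ R, lr.1.Linear ∧ lr.2.Linear

/-- No rule has a variable as left-hand side or as right-hand side. -/
def CollapseFree (R : Set (Tm σ ar × Tm σ ar)) : Prop :=
  ∀ lr ∈ R, ¬ IsVarTm lr.1 ∧ ¬ IsVarTm lr.2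

/-- Transport of a rule set along an arity-preserving renaming of the alphabet. -/
def mapRules (ι : σ → γ) (h : ∀ s, arγ (ι s) = ar s) (R : Set (Tm σ ar × Tm σ ar)) :
    Set (Tm γ arγ × Tm γ arγ) :=
  (fun lr => (lr.1.map ι h, lr.2.map ι h)) '' R

end Rewriting

/-- A bottom-up tree automaton over `(σ, ar)` with state type `Q`:
transition rules `δ(q₁,…,qₙ) → q`, λ-rules `q → q'`, and final states. -/
structure BTA (σ : Type) (ar : σ → ℕ) (Q : Type) where
  trans : ∀ f : σ, (Fin (ar f) → Q) → Q → Prop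
  eps : Q → Q → Prop
  final : Q → Prop

namespace BTA

variable {σ : Type} {ar : σ → ℕ} {Q : Type}

/-- `t →* q`: the (ground) term `t` can be rewritten to the state `q`. -/
inductive Reach (A : BTA σ ar Q) : Tm σ ar → Q → Prop
  | app {f : σ} {ts : Fin (ar f) → Tm σ ar} {qs : Fin (ar f) → Q} {q : Q} :
      (∀ i, Reach A (ts i) (qs i)) → A.trans f qs q → Reach A (Tm.app f ts) q
  | eps {t : Tm σ ar} {q q' : Q} : Reach A t q → A.eps q q' → Reach A t q'

/-- The tree language recognized by the automaton. -/
def Lang (A : BTA σ ar Q) : Set (Tm σ ar) := {t | ∃ q, A.final q ∧ A.Reach t q}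

end BTA

/-- A tree language is recognizable if some bottom-up tree automaton with a
finite state set recognizes it. -/
def Recognizable {σ : Type} {ar : σ → ℕ} (L : Set (Tm σ ar)) : Prop :=
  ∃ (Q : Type) (_ : Finite Q) (A : BTA σ ar Q), A.Lang = L

/-- `R` (a TRS over all of `σ`, thought of as `sign(R)`) preserves
recognizability of finite tree languages: for every ranked alphabet extending
`σ` (i.e. every finite type with an arity-preserving injection from `σ`) and
every finite tree language of ground terms, the descendant set is recognizable. -/
def PRF {σ : Type} {ar : σ → ℕ} (R : Set (Tm σ ar × Tm σ ar)) : Prop :=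
  ∀ (γ : Type) (arγ : γ → ℕ), Finite γ →
    ∀ ι : σ → γ, Function.Injective ι →
      ∀ h : ∀ s, arγ (ι s) = ar s,
        ∀ L : Set (Tm γ arγ), L.Finite → (∀ t ∈ L, t.Ground) →
          Recognizable (Desc (mapRules ι h R) L)

/-- `R` preserves recognizability: as `PRF`, but for arbitrary recognizable
tree languages. -/
def PR {σ : Type} {ar : σ → ℕ} (R : Set (Tm σ ar × Tm σ ar)) : Prop :=
  ∀ (γ : Type) (arγ : γ → ℕ), Finite γ →
    ∀ ι : σ → γ, Function.Injective ι →
      ∀ h : ∀ s, arγ (ι s) = ar s,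
        ∀ L : Set (Tm γ arγ), Recognizable L →
          Recognizable (Desc (mapRules ι h R) L)

/-! ### Statement 5: the murg TRS
`{ ♯ → f(♯), ♯ → ♭, $ → f($), $ → ♭, g(x₁,x₁) → h(x₁,x₁) }` over the alphabet
`{♯(0), $(0), ♭(0), f(1), g(2), h(2)}`. -/

inductive Sg5 : Type
  | sharp | dollar | flat | f | g | h
deriving DecidableEq

instance : Fintype Sg5 :=
  ⟨{.sharp, .dollar, .flat, .f, .g, .h}, by intro x; cases x <;> decide⟩

def ar5 : Sg5 → ℕ
  | .sharp => 0
  | .dollar => 0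
  | .flat => 0
  | .f => 1
  | .g => 2
  | .h => 2

def sharp5 : Tm Sg5 ar5 := .app .sharp ![]
def dollar5 : Tm Sg5 ar5 := .app .dollar ![]
def flat5 : Tm Sg5 ar5 := .app .flat ![]
def f5 (t : Tm Sg5 ar5) : Tm Sg5 ar5 := .app .f ![t]
def g5 (a b : Tm Sg5 ar5) : Tm Sg5 ar5 := .app .g ![a, b]
def h5 (a b : Tm Sg5 ar5) : Tm Sg5 ar5 := .app .h ![a, b]

def R5 : Set (Tm Sg5 ar5 × Tm Sg5 ar5) :=
  {(sharp5, f5 sharp5), (sharp5, flat5), (dollar5, f5 dollar5), (dollar5, flat5),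
   (g5 (.var 0) (.var 0), h5 (.var 0) (.var 0))}

namespace Stmt5
open Tm Function

abbrev T5 := Tm Sg5 ar5

lemma app_inj {f : Sg5} {ts ss : Fin (ar5 f) → T5} (h : Tm.app f ts = Tm.app f ss) : ts = ss := by
  cases h; rfl

lemma upd1 (a t' : T5) : Function.update (![a] : Fin 1 → T5) 0 t' = ![t'] := by
  funext i; fin_cases i <;> simp

lemma upd20 (a b t' : T5) : Function.update (![a, b] : Fin 2 → T5) 0 t' = ![t', b] := by
  funext i; fin_cases i <;> simp [Function.update]

lemma upd21 (a b t' : T5) : Function.update (![a, b] : Fin 2 → T5) 1 t' = ![a, t'] := by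
  funext i; fin_cases i <;> simp [Function.update]

lemma ground_sharp : sharp5.Ground := fun i => i.elim0
lemma ground_dollar : dollar5.Ground := fun i => i.elim0
lemma ground_flat : flat5.Ground := fun i => i.elim0
lemma ground_f {t : T5} (h : t.Ground) : (f5 t).Ground := by
  intro i; fin_cases i; exact h

lemma ground_fk (k : ℕ) : (f5^[k] flat5).Ground := by
  induction k with
  | zero => exact ground_flat
  | succ k ih => rw [Function.iterate_succ_apply']; exact ground_f ih

lemma subst_ground (θ : ℕ → T5) : ∀ {t : T5}, t.Ground → t.subst θ = t := by
  intro t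
  induction t with
  | var n => intro h; cases h
  | app f ts ih =>
    intro hg
    show Tm.app f _ = _
    congr 1
    funext i
    exact ih i (hg i)

lemma height_fk_base (c : T5) : ∀ k, (f5^[k] c).height = k + c.height := by
  intro k
  induction k with
  | zero => simp
  | succ k ih =>
    rw [Function.iterate_succ_apply']
    show (Finset.univ.sup fun i : Fin 1 => ((![f5^[k] c] : Fin 1 → T5) i).height + 1) = _
    simp [ih]; omega

lemma fk_flat_inj {k m : ℕ} (h : f5^[k] flat5 = f5^[m] flat5) : k = m := by
  have := congrArg Tm.height h
  rw [height_fk_base, height_fk_base] at this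
  omega


lemma f5_inj {a b : T5} (h : f5 a = f5 b) : a = b := by
  have := congrFun (app_inj h) ⟨0, by decide⟩
  exact this

lemma fk_base_inj {c d : Sg5} (hc : ar5 c = 0) (hd : ar5 d = 0)
    {tc : Fin (ar5 c) → T5} {td : Fin (ar5 d) → T5} :
    ∀ {j i : ℕ}, f5^[j] (Tm.app c tc) = f5^[i] (Tm.app d td) → j = i ∧ c = d := by
  intro j
  induction j with
  | zero =>
    intro i h
    cases i with
    | zero =>
      simp only [Function.iterate_zero, id_eq] at h
      cases h; exact ⟨rfl, rfl⟩
    | succ i =>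
      rw [Function.iterate_succ_apply'] at h
      exfalso
      simp only [Function.iterate_zero, id_eq, f5, Tm.app.injEq] at h
      rw [(Tm.app.inj h).1] at hc; simp [ar5] at hc
  | succ j ih =>
    intro i h
    cases i with
    | zero =>
      rw [Function.iterate_succ_apply'] at h
      exfalso
      simp only [Function.iterate_zero, id_eq, f5, Tm.app.injEq] at h
      rw [← (Tm.app.inj h).1] at hd; simp [ar5] at hd
    | succ i =>
      rw [Function.iterate_succ_apply', Function.iterate_succ_apply'] at h
      obtain ⟨hj, hcd⟩ := ih (f5_inj h)
      exact ⟨by omega, hcd⟩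

/-- rule steps -/
lemma step_rule_ground {l r : T5} (h : (l, r) ∈ R5) (hl : l.Ground) (hr : r.Ground) :
    Step R5 l r := by
  have := Step.rule (θ := fun _ => flat5) h
  rwa [subst_ground _ hl, subst_ground _ hr] at this

lemma step_sharp_f : Step R5 sharp5 (f5 sharp5) :=
  step_rule_ground (by simp [R5]) ground_sharp (ground_f ground_sharp)
lemma step_sharp_flat : Step R5 sharp5 flat5 :=
  step_rule_ground (by simp [R5]) ground_sharp ground_flat
lemma step_dollar_f : Step R5 dollar5 (f5 dollar5) :=
  step_rule_ground (by simp [R5]) ground_dollar (ground_f ground_dollar)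
lemma step_dollar_flat : Step R5 dollar5 flat5 :=
  step_rule_ground (by simp [R5]) ground_dollar ground_flat

lemma step_g_rule (a : T5) : Step R5 (g5 a a) (h5 a a) := by
  have hm : (g5 (.var 0) (.var 0), h5 (.var 0) (.var 0)) ∈ R5 := by simp [R5]
  have := Step.rule (θ := fun _ => a) hm
  have e1 : (g5 (.var 0) (.var 0)).subst (fun _ => a) = g5 a a := by
    show Tm.app _ _ = _
    congr 1; funext i; fin_cases i <;> rfl
  have e2 : (h5 (.var 0) (.var 0)).subst (fun _ => a) = h5 a a := by
    show Tm.app _ _ = _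
    congr 1; funext i; fin_cases i <;> rfl
  rwa [e1, e2] at this

/-- congruence lifts -/
lemma step_f {a b : T5} (h : Step R5 a b) : Step R5 (f5 a) (f5 b) := by
  have := Step.congr (R := R5) (f := Sg5.f) (ts := ![a]) (t' := b) (⟨0, Nat.one_pos⟩ : Fin _) h
  erw [show Function.update (![a] : Fin (ar5 Sg5.f) → T5) ⟨0, Nat.one_pos⟩ b = ![b] from upd1 a b] at this
  exact this

lemma step_g1 {a b c : T5} (h : Step R5 a b) : Step R5 (g5 a c) (g5 b c) := by
  have := Step.congr (R := R5) (f := Sg5.g) (ts := ![a, c]) (t' := b) (⟨0, Nat.succ_pos 1⟩ : Fin _) h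
  erw [show Function.update (![a, c] : Fin (ar5 Sg5.g) → T5) ⟨0, Nat.succ_pos 1⟩ b = ![b, c] from upd20 a c b] at this
  exact this

lemma step_g2 {a b c : T5} (h : Step R5 b c) : Step R5 (g5 a b) (g5 a c) := by
  have := Step.congr (R := R5) (f := Sg5.g) (ts := ![a, b]) (t' := c) (⟨1, Nat.one_lt_two⟩ : Fin _) h
  erw [show Function.update (![a, b] : Fin (ar5 Sg5.g) → T5) ⟨1, Nat.one_lt_two⟩ c = ![a, c] from upd21 a b c] at this
  exact this

lemma steps_f {a b : T5} (h : Steps R5 a b) : Steps R5 (f5 a) (f5 b) :=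
  Relation.ReflTransGen.lift f5 (fun _ _ => step_f) _ _ h

lemma steps_g1 {a b c : T5} (h : Steps R5 a b) : Steps R5 (g5 a c) (g5 b c) :=
  Relation.ReflTransGen.lift (fun x => g5 x c) (fun _ _ => step_g1) _ _ h

lemma steps_g2 {a b c : T5} (h : Steps R5 b c) : Steps R5 (g5 a b) (g5 a c) :=
  Relation.ReflTransGen.lift (fun x => g5 a x) (fun _ _ => step_g2) _ _ h

lemma steps_sharp (k : ℕ) : Steps R5 sharp5 (f5^[k] flat5) := by
  induction k with
  | zero => exact Relation.ReflTransGen.single step_sharp_flat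
  | succ k ih =>
    rw [Function.iterate_succ_apply']
    exact Relation.ReflTransGen.head step_sharp_f (steps_f ih)

lemma steps_dollar (k : ℕ) : Steps R5 dollar5 (f5^[k] flat5) := by
  induction k with
  | zero => exact Relation.ReflTransGen.single step_dollar_flat
  | succ k ih =>
    rw [Function.iterate_succ_apply']
    exact Relation.ReflTransGen.head step_dollar_f (steps_f ih)

lemma mem_desc (k : ℕ) :
    h5 (f5^[k] flat5) (f5^[k] flat5) ∈ Desc R5 {g5 sharp5 dollar5} := by
  refine ⟨g5 sharp5 dollar5, rfl, ?_⟩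
  exact ((steps_g1 (steps_sharp k)).trans (steps_g2 (steps_dollar k))).trans
    (Relation.ReflTransGen.single (step_g_rule _))

/-- membership in R5 as a disjunction -/
lemma mem_R5 {l r : T5} (h : (l, r) ∈ R5) :
    (l = sharp5 ∧ r = f5 sharp5) ∨ (l = sharp5 ∧ r = flat5) ∨
    (l = dollar5 ∧ r = f5 dollar5) ∨ (l = dollar5 ∧ r = flat5) ∨
    (l = g5 (.var 0) (.var 0) ∧ r = h5 (.var 0) (.var 0)) := by
  simp only [R5, Set.mem_insert_iff, Set.mem_singleton_iff, Prod.mk.injEq] at h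
  tauto

lemma no_step_flat : ∀ (k : ℕ) {u : T5}, Step R5 (f5^[k] flat5) u → False := by
  intro k
  induction k with
  | zero =>
    intro u h
    generalize hq : f5^[0] flat5 = q at h
    cases h with
    | rule θ hmem =>
      rcases mem_R5 hmem with ⟨hl,_⟩|⟨hl,_⟩|⟨hl,_⟩|⟨hl,_⟩|⟨hl,_⟩ <;> subst hl <;>
        simp [flat5, sharp5, dollar5, g5, Tm.subst] at hq <;> exact absurd (Tm.app.inj hq).1 (by decide)
    | congr i hs =>
      simp only [Function.iterate_zero, id_eq, flat5, Tm.app.injEq] at hq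
      obtain ⟨hf, -⟩ := Tm.app.inj hq
      subst hf
      exact i.elim0
  | succ k ih =>
    intro u h
    rw [Function.iterate_succ_apply'] at h
    generalize hq : f5 (f5^[k] flat5) = q at h
    cases h with
    | rule θ hmem =>
      rcases mem_R5 hmem with ⟨hl,_⟩|⟨hl,_⟩|⟨hl,_⟩|⟨hl,_⟩|⟨hl,_⟩ <;> subst hl <;>
        simp [f5, flat5, sharp5, dollar5, g5, Tm.subst] at hq <;> exact absurd (Tm.app.inj hq).1 (by decide)
    | congr i hs =>
      simp only [f5, Tm.app.injEq] at hq
      obtain ⟨hf, hts⟩ := Tm.app.inj hq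
      subst hf
      have hts' := eq_of_heq hts
      subst hts'
      rcases i with ⟨iv, hiv⟩
      have h1 : ar5 Sg5.f = 1 := rfl
      rw [h1] at hiv
      obtain rfl : iv = 0 := by omega
      exact ih hs
def Dsh : Set T5 := {t | ∃ k, t = f5^[k] sharp5 ∨ t = f5^[k] flat5}
def Ddl : Set T5 := {t | ∃ k, t = f5^[k] dollar5 ∨ t = f5^[k] flat5}

lemma step_fk_sharp : ∀ (k : ℕ) {u : T5}, Step R5 (f5^[k] sharp5) u → u ∈ Dsh := by
  intro k
  induction k with
  | zero =>
    intro u h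
    generalize hq : f5^[0] sharp5 = q at h
    cases h with
    | rule θ hmem =>
      rcases mem_R5 hmem with ⟨hl,hr⟩|⟨hl,hr⟩|⟨hl,hr⟩|⟨hl,hr⟩|⟨hl,hr⟩ <;> subst hl <;> subst hr
      · rw [subst_ground _ (ground_f ground_sharp)]
        exact ⟨1, Or.inl rfl⟩
      · rw [subst_ground _ ground_flat]
        exact ⟨0, Or.inr rfl⟩
      · simp [sharp5, dollar5, Tm.subst] at hq; exact absurd (Tm.app.inj hq).1 (by decide)
      · simp [sharp5, dollar5, Tm.subst] at hq; exact absurd (Tm.app.inj hq).1 (by decide)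
      · simp [sharp5, g5, Tm.subst] at hq; exact absurd (Tm.app.inj hq).1 (by decide)
    | congr i hs =>
      simp only [Function.iterate_zero, id_eq, sharp5, Tm.app.injEq] at hq
      obtain ⟨hf, -⟩ := Tm.app.inj hq
      subst hf
      exact i.elim0
  | succ k ih =>
    intro u h
    rw [Function.iterate_succ_apply'] at h
    generalize hq : f5 (f5^[k] sharp5) = q at h
    cases h with
    | rule θ hmem =>
      rcases mem_R5 hmem with ⟨hl,-⟩|⟨hl,-⟩|⟨hl,-⟩|⟨hl,-⟩|⟨hl,-⟩ <;> subst hl <;>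
        simp [f5, sharp5, dollar5, g5, Tm.subst] at hq <;> exact absurd (Tm.app.inj hq).1 (by decide)
    | congr i hs =>
      simp only [f5, Tm.app.injEq] at hq
      obtain ⟨hf, hts⟩ := Tm.app.inj hq
      subst hf
      have hts' := eq_of_heq hts
      subst hts'
      rcases i with ⟨iv, hiv⟩
      obtain rfl : iv = 0 := by
        have h1 : ar5 Sg5.f = 1 := rfl
        omega
      obtain ⟨j, hj | hj⟩ := ih hs
      all_goals {
        subst hj
        erw [show Function.update (![f5^[k] sharp5] : Fin (ar5 Sg5.f) → T5) ⟨0, hiv⟩ _ = _ from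
          upd1 (f5^[k] sharp5) _]
        refine ⟨j + 1, ?_⟩
        simp only [Function.iterate_succ_apply']
        first
        | exact Or.inl rfl
        | exact Or.inr rfl
      }

lemma step_fk_dollar : ∀ (k : ℕ) {u : T5}, Step R5 (f5^[k] dollar5) u → u ∈ Ddl := by
  intro k
  induction k with
  | zero =>
    intro u h
    generalize hq : f5^[0] dollar5 = q at h
    cases h with
    | rule θ hmem =>
      rcases mem_R5 hmem with ⟨hl,hr⟩|⟨hl,hr⟩|⟨hl,hr⟩|⟨hl,hr⟩|⟨hl,hr⟩ <;> subst hl <;> subst hr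
      · simp [sharp5, dollar5, Tm.subst] at hq; exact absurd (Tm.app.inj hq).1 (by decide)
      · simp [sharp5, dollar5, Tm.subst] at hq; exact absurd (Tm.app.inj hq).1 (by decide)
      · rw [subst_ground _ (ground_f ground_dollar)]
        exact ⟨1, Or.inl rfl⟩
      · rw [subst_ground _ ground_flat]
        exact ⟨0, Or.inr rfl⟩
      · simp [dollar5, g5, Tm.subst] at hq; exact absurd (Tm.app.inj hq).1 (by decide)
    | congr i hs =>
      simp only [Function.iterate_zero, id_eq, dollar5, Tm.app.injEq] at hq
      obtain ⟨hf, -⟩ := Tm.app.inj hq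
      subst hf
      exact i.elim0
  | succ k ih =>
    intro u h
    rw [Function.iterate_succ_apply'] at h
    generalize hq : f5 (f5^[k] dollar5) = q at h
    cases h with
    | rule θ hmem =>
      rcases mem_R5 hmem with ⟨hl,-⟩|⟨hl,-⟩|⟨hl,-⟩|⟨hl,-⟩|⟨hl,-⟩ <;> subst hl <;>
        simp [f5, sharp5, dollar5, g5, Tm.subst] at hq <;> exact absurd (Tm.app.inj hq).1 (by decide)
    | congr i hs =>
      simp only [f5, Tm.app.injEq] at hq
      obtain ⟨hf, hts⟩ := Tm.app.inj hq
      subst hf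
      have hts' := eq_of_heq hts
      subst hts'
      rcases i with ⟨iv, hiv⟩
      obtain rfl : iv = 0 := by
        have h1 : ar5 Sg5.f = 1 := rfl
        omega
      obtain ⟨j, hj | hj⟩ := ih hs
      all_goals {
        subst hj
        erw [show Function.update (![f5^[k] dollar5] : Fin (ar5 Sg5.f) → T5) ⟨0, hiv⟩ _ = _ from
          upd1 (f5^[k] dollar5) _]
        refine ⟨j + 1, ?_⟩
        simp only [Function.iterate_succ_apply']
        first
        | exact Or.inl rfl
        | exact Or.inr rfl
      }

lemma step_Dsh {a u : T5} (ha : a ∈ Dsh) (h : Step R5 a u) : u ∈ Dsh := by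
  obtain ⟨k, hk | hk⟩ := ha
  · exact step_fk_sharp k (hk ▸ h)
  · exact absurd (hk ▸ h) (fun hh => no_step_flat k hh)

lemma step_Ddl {a u : T5} (ha : a ∈ Ddl) (h : Step R5 a u) : u ∈ Ddl := by
  obtain ⟨k, hk | hk⟩ := ha
  · exact step_fk_dollar k (hk ▸ h)
  · exact absurd (hk ▸ h) (fun hh => no_step_flat k hh)

lemma mem_both {a : T5} (h1 : a ∈ Dsh) (h2 : a ∈ Ddl) : ∃ k, a = f5^[k] flat5 := by
  obtain ⟨j, hj | hj⟩ := h1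
  · obtain ⟨i, hi | hi⟩ := h2
    · have heq : f5^[j] (Tm.app Sg5.sharp ![]) = f5^[i] (Tm.app Sg5.dollar ![]) :=
        hj.symm.trans hi
      exact absurd (fk_base_inj (by decide) (by decide) heq).2 (by decide)
    · have heq : f5^[j] (Tm.app Sg5.sharp ![]) = f5^[i] (Tm.app Sg5.flat ![]) :=
        hj.symm.trans hi
      exact absurd (fk_base_inj (by decide) (by decide) heq).2 (by decide)
  · exact ⟨j, hj⟩
def S5 : Set T5 :=
  {t | (∃ a ∈ Dsh, ∃ b ∈ Ddl, t = g5 a b) ∨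
       ∃ k : ℕ, t = h5 (f5^[k] flat5) (f5^[k] flat5)}

lemma no_step_h {k : ℕ} {u : T5} (h : Step R5 (h5 (f5^[k] flat5) (f5^[k] flat5)) u) : False := by
  generalize hq : h5 (f5^[k] flat5) (f5^[k] flat5) = q at h
  cases h with
  | rule θ hmem =>
    rcases mem_R5 hmem with ⟨hl,-⟩|⟨hl,-⟩|⟨hl,-⟩|⟨hl,-⟩|⟨hl,-⟩ <;> subst hl <;>
      simp [h5, sharp5, dollar5, g5, Tm.subst] at hq <;> exact absurd (Tm.app.inj hq).1 (by decide)
  | congr i hs =>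
    simp only [h5, Tm.app.injEq] at hq
    obtain ⟨hf, hts⟩ := Tm.app.inj hq
    subst hf
    have hts' := eq_of_heq hts
    subst hts'
    rcases i with ⟨iv, hiv⟩
    have h2 : ar5 Sg5.h = 2 := rfl
    obtain rfl | rfl : iv = 0 ∨ iv = 1 := by omega
    · exact no_step_flat k hs
    · exact no_step_flat k hs

lemma step_g_shape {a b u : T5} (ha : a ∈ Dsh) (hb : b ∈ Ddl)
    (h : Step R5 (g5 a b) u) : u ∈ S5 := by
  generalize hq : g5 a b = q at h
  cases h with
  | rule θ hmem =>
    rcases mem_R5 hmem with ⟨hl,hr⟩|⟨hl,hr⟩|⟨hl,hr⟩|⟨hl,hr⟩|⟨hl,hr⟩ <;> subst hl <;> subst hr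
    · simp [g5, sharp5, Tm.subst] at hq; exact absurd (Tm.app.inj hq).1 (by decide)
    · simp [g5, sharp5, Tm.subst] at hq; exact absurd (Tm.app.inj hq).1 (by decide)
    · simp [g5, dollar5, Tm.subst] at hq; exact absurd (Tm.app.inj hq).1 (by decide)
    · simp [g5, dollar5, Tm.subst] at hq; exact absurd (Tm.app.inj hq).1 (by decide)
    · -- the g-rule
      simp only [g5, Tm.subst, Tm.app.injEq, heq_eq_eq, true_and] at hq
      replace hq := eq_of_heq (Tm.app.inj hq).2
      have ha' : a = θ 0 := congrFun hq ⟨0, Nat.succ_pos 1⟩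
      have hb' : b = θ 0 := congrFun hq ⟨1, Nat.one_lt_two⟩
      subst ha'
      rw [hb'] at hb
      obtain ⟨k, hk⟩ := mem_both ha hb
      have e2 : Tm.subst θ (h5 (.var 0) (.var 0)) = h5 (θ 0) (θ 0) := by
        show Tm.app _ _ = _
        congr 1
        funext i
        fin_cases i <;> rfl
      rw [e2, hk]
      exact Or.inr ⟨k, rfl⟩
  | congr i hs =>
    simp only [g5, Tm.app.injEq] at hq
    obtain ⟨hf, hts⟩ := Tm.app.inj hq
    subst hf
    have hts' := eq_of_heq hts
    subst hts'
    rcases i with ⟨iv, hiv⟩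
    have h2 : ar5 Sg5.g = 2 := rfl
    obtain rfl | rfl : iv = 0 ∨ iv = 1 := by omega
    · erw [show Function.update (![a, b] : Fin (ar5 Sg5.g) → T5) ⟨0, hiv⟩ _ = _ from upd20 a b _]
      exact Or.inl ⟨_, step_Dsh ha hs, b, hb, rfl⟩
    · erw [show Function.update (![a, b] : Fin (ar5 Sg5.g) → T5) ⟨1, hiv⟩ _ = _ from upd21 a b _]
      exact Or.inl ⟨a, ha, _, step_Ddl hb hs, rfl⟩

lemma step_S5 {t u : T5} (ht : t ∈ S5) (h : Step R5 t u) : u ∈ S5 := by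
  rcases ht with ⟨a, ha, b, hb, rfl⟩ | ⟨k, rfl⟩
  · exact step_g_shape ha hb h
  · exact absurd h (fun hh => no_step_h hh)

lemma desc_subset_S5 : Desc R5 {g5 sharp5 dollar5} ⊆ S5 := by
  rintro t ⟨q, hq, hsteps⟩
  rw [Set.mem_singleton_iff] at hq
  subst hq
  induction hsteps with
  | refl => exact Or.inl ⟨sharp5, ⟨0, Or.inl rfl⟩, dollar5, ⟨0, Or.inl rfl⟩, rfl⟩
  | tail hseq hstep ih => exact step_S5 ih hstep
lemma part1 : Desc R5 {g5 sharp5 dollar5} ∩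
    {t : T5 | ∃ t₁ t₂ : T5, t₁.Ground ∧ t₂.Ground ∧ t = h5 t₁ t₂} =
    {t : T5 | ∃ k : ℕ, t = h5 (f5^[k] flat5) (f5^[k] flat5)} := by
  ext t
  constructor
  · rintro ⟨hd, t₁, t₂, -, -, rfl⟩
    rcases desc_subset_S5 hd with ⟨a, -, b, -, heq⟩ | hk
    · exfalso
      simp [g5, h5] at heq; exact absurd (Tm.app.inj heq).1 (by decide)
    · exact hk
  · rintro ⟨k, rfl⟩
    exact ⟨mem_desc k, _, _, ground_fk k, ground_fk k, rfl⟩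

lemma reach_eps_star {Q : Type} {A : BTA Sg5 ar5 Q} {t : T5} {q q' : Q}
    (h : A.Reach t q) (he : Relation.ReflTransGen A.eps q q') : A.Reach t q' := by
  induction he with
  | refl => exact h
  | tail hseq hstep ih => exact BTA.Reach.eps ih hstep

lemma reach_inv {Q : Type} {A : BTA Sg5 ar5 Q} {t : T5} {q : Q} (h : A.Reach t q) :
    ∀ {f : Sg5} {ts : Fin (ar5 f) → T5}, t = Tm.app f ts →
      ∃ (qs : Fin (ar5 f) → Q) (q₀ : Q), (∀ i, A.Reach (ts i) (qs i)) ∧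
        A.trans f qs q₀ ∧ Relation.ReflTransGen A.eps q₀ q := by
  induction h with
  | @app f' ts' qs q hts htrans _ =>
    intro f ts heq
    rw [Tm.app.injEq] at heq
    obtain ⟨hf, hteq⟩ := heq
    subst hf
    have hteq' := eq_of_heq hteq
    subst hteq'
    exact ⟨qs, q, hts, htrans, Relation.ReflTransGen.refl⟩
  | eps hr he ih =>
    intro f ts heq
    obtain ⟨qs, q₀, h1, h2, h3⟩ := ih heq
    exact ⟨qs, q₀, h1, h2, h3.tail he⟩

lemma part2 : ¬ Recognizable (Desc R5 {g5 sharp5 dollar5}) := by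
  rintro ⟨Q, hQ, A, hL⟩
  haveI := hQ
  have hmem : ∀ k : ℕ, ∃ (q1 q2 q0 qf : Q),
      A.Reach (f5^[k] flat5) q1 ∧ A.Reach (f5^[k] flat5) q2 ∧
      A.trans Sg5.h ![q1, q2] q0 ∧ Relation.ReflTransGen A.eps q0 qf ∧ A.final qf := by
    intro k
    have hk : h5 (f5^[k] flat5) (f5^[k] flat5) ∈ A.Lang := by
      rw [hL]; exact mem_desc k
    obtain ⟨qf, hqf, hreach⟩ := hk
    obtain ⟨qs, q₀, h1, h2, h3⟩ := reach_inv hreach (f := Sg5.h)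
      (ts := ![f5^[k] flat5, f5^[k] flat5]) rfl
    refine ⟨qs ⟨0, Nat.succ_pos 1⟩, qs ⟨1, Nat.one_lt_two⟩, q₀, qf,
      h1 ⟨0, Nat.succ_pos 1⟩, h1 ⟨1, Nat.one_lt_two⟩, ?_, h3, hqf⟩
    have hqs : (![qs ⟨0, Nat.succ_pos 1⟩, qs ⟨1, Nat.one_lt_two⟩] : Fin (ar5 Sg5.h) → Q) = qs := by
      funext i
      rcases i with ⟨iv, hiv⟩
      have h2' : ar5 Sg5.h = 2 := rfl
      obtain rfl | rfl : iv = 0 ∨ iv = 1 := by omega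
      · rfl
      · rfl
    rw [hqs]
    exact h2
  choose q1 q2 q0 qf hr1 hr2 htr hep hfin using hmem
  obtain ⟨k, m, hne, heq⟩ :=
    Finite.exists_ne_map_eq_of_infinite (fun n : ℕ => (q1 n, q2 n, q0 n, qf n))
  obtain ⟨e1, e2, e3, e4⟩ : q1 k = q1 m ∧ q2 k = q2 m ∧ q0 k = q0 m ∧ qf k = qf m := by
    simpa [Prod.ext_iff] using heq
  have happ : A.Reach (Tm.app Sg5.h ![f5^[k] flat5, f5^[m] flat5]) (q0 k) := by
    refine BTA.Reach.app (A := A) (f := Sg5.h) (ts := ![f5^[k] flat5, f5^[m] flat5]) (qs := ![q1 k, q2 k]) ?_ (htr k)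
    intro i
    rcases i with ⟨iv, hiv⟩
    have h2' : ar5 Sg5.h = 2 := rfl
    obtain rfl | rfl : iv = 0 ∨ iv = 1 := by omega
    · exact hr1 k
    · have : (![q1 k, q2 k] : Fin (ar5 Sg5.h) → Q) ⟨1, hiv⟩ = q2 m := e2
      erw [this]
      exact hr2 m
  have hmem2 : h5 (f5^[k] flat5) (f5^[m] flat5) ∈ Desc R5 {g5 sharp5 dollar5} := by
    rw [← hL]
    exact ⟨qf k, hfin k, reach_eps_star happ (hep k)⟩
  have hin : h5 (f5^[k] flat5) (f5^[m] flat5) ∈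
      ({t : T5 | ∃ j : ℕ, t = h5 (f5^[j] flat5) (f5^[j] flat5)}) := by
    rw [← part1]
    exact ⟨hmem2, _, _, ground_fk k, ground_fk m, rfl⟩
  obtain ⟨j, hj⟩ := hin
  have hts := app_inj (f := Sg5.h) hj
  have ek : f5^[k] flat5 = f5^[j] flat5 := congrFun hts ⟨0, Nat.succ_pos 1⟩
  have em : f5^[m] flat5 = f5^[j] flat5 := congrFun hts ⟨1, Nat.one_lt_two⟩
  exact hne (by rw [fk_flat_inj ek, fk_flat_inj em])

end Stmt5

theorem stmt_5 :
    Desc R5 {g5 sharp5 dollar5} ∩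
        {t : Tm Sg5 ar5 | ∃ t₁ t₂ : Tm Sg5 ar5, t₁.Ground ∧ t₂.Ground ∧ t = h5 t₁ t₂} =
      {t : Tm Sg5 ar5 | ∃ k : ℕ, t = h5 (f5^[k] flat5) (f5^[k] flat5)} ∧
    ¬ Recognizable (Desc R5 {g5 sharp5 dollar5}) :=
  ⟨Stmt5.part1, Stmt5.part2⟩
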